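/- For every real Λ > 1, there exists a unique c in the open interval (0,1) such that c = tanh(Λ·c). -/

import Mathlib

open Real Set Filter Topology

lemma hasDerivAt_tanh' (x : ℝ) : HasDerivAt Real.tanh (1 / Real.cosh x ^ 2) x := by
  have h : HasDerivAt (fun y => Real.sinh y / Real.cosh y)
      ((Real.cosh x * Real.cosh x - Real.sinh x * Real.sinh x) / Real.cosh x ^ 2) x :=
    (Real.hasDerivAt_sinh x).div (Real.hasDerivAt_cosh x) (Real.cosh_pos x).ne'
  have heq : (fun y => Real.sinh y / Real.cosh y) = Real.tanh := by
    funext y; rw [Real.tanh_eq_sinh_div_cosh]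
  rw [heq] at h
  have h2 : (Real.cosh x * Real.cosh x - Real.sinh x * Real.sinh x) / Real.cosh x ^ 2
      = 1 / Real.cosh x ^ 2 := by
    rw [show Real.cosh x * Real.cosh x - Real.sinh x * Real.sinh x
      = Real.cosh x ^ 2 - Real.sinh x ^ 2 by ring, Real.cosh_sq_sub_sinh_sq]
  rwa [h2] at h
lemma continuous_tanh' : Continuous Real.tanh :=
  continuous_iff_continuousAt.2 fun x => (hasDerivAt_tanh' x).continuousAt

lemma tanh_strictConcaveOn : StrictConcaveOn ℝ (Set.Ici (0:ℝ)) Real.tanh := by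
  apply StrictAntiOn.strictConcaveOn_of_deriv (convex_Ici 0) continuous_tanh'.continuousOn
  intro a ha b hb hab
  rw [interior_Ici] at ha hb
  rw [(hasDerivAt_tanh' a).deriv, (hasDerivAt_tanh' b).deriv]
  have hca : Real.cosh a < Real.cosh b := by
    rw [Real.cosh_lt_cosh]
    rwa [abs_of_pos ha, abs_of_pos hb]
  have h1 : (0:ℝ) < Real.cosh a := Real.cosh_pos a
  have h2 : (0:ℝ) < Real.cosh b := Real.cosh_pos b
  apply div_lt_div_of_pos_left one_pos (by positivity)
  nlinarith

theorem tanh_fixed_point_exists_unique (Λ : ℝ) (hΛ : 1 < Λ) :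
    ∃! c : ℝ, c ∈ Set.Ioo (0:ℝ) 1 ∧ c = Real.tanh (Λ * c) := by
  -- key uniqueness lemma via strict concavity
  have key : ∀ a b : ℝ, (a ∈ Set.Ioo (0:ℝ) 1 ∧ a = Real.tanh (Λ * a)) →
      (b ∈ Set.Ioo (0:ℝ) 1 ∧ b = Real.tanh (Λ * b)) → a < b → False := by
    rintro a b ⟨⟨ha0, _⟩, hae⟩ ⟨⟨hb0, _⟩, hbe⟩ hab
    have hΛ0 : (0:ℝ) < Λ := lt_trans one_pos hΛ
    set t : ℝ := a / b with ht
    have ht0 : 0 < t := div_pos ha0 hb0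
    have ht1 : t < 1 := (div_lt_one hb0).2 hab
    have hmem1 : Λ * b ∈ Set.Ici (0:ℝ) := le_of_lt (show (0:ℝ) < Λ * b by positivity)
    have hmem0 : (0:ℝ) ∈ Set.Ici (0:ℝ) := Set.mem_Ici.mpr le_rfl
    have hne : Λ * b ≠ 0 := by positivity
    have hconc := tanh_strictConcaveOn.2 hmem1 hmem0 hne ht0 (show (0:ℝ) < 1 - t by linarith) (by ring)
    have hcomb : t • (Λ * b) + (1 - t) • (0:ℝ) = Λ * a := by
      field_simp [ht]
      rw [ht, smul_eq_mul, smul_eq_mul, mul_zero, add_zero, div_mul_eq_mul_div, mul_div_assoc, mul_div_cancel_right₀ Λ hb0.ne', mul_comm]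
    rw [hcomb] at hconc
    have : t • Real.tanh (Λ * b) + (1 - t) • Real.tanh 0 = a := by
      rw [Real.tanh_zero, ← hbe, smul_eq_mul, smul_eq_mul, mul_zero, add_zero, ht]
      field_simp
    rw [this, ← hae] at hconc
    exact lt_irrefl a hconc
  -- existence: find x0 ∈ (0,1) with tanh (Λ x0) > x0
  have hd : HasDerivAt (fun x : ℝ => Real.tanh (Λ * x)) Λ 0 := by
    have h1 : HasDerivAt (fun x : ℝ => Λ * x) Λ 0 := by simpa using (hasDerivAt_id (0:ℝ)).const_mul Λ
    have := (hasDerivAt_tanh' (Λ * 0)).comp 0 h1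
    simp only [mul_zero, Real.cosh_zero, one_pow, div_one, one_mul] at this
    exact this
  have hslope := hasDerivAt_iff_tendsto_slope.1 hd
  have hev : ∀ᶠ x in 𝓝[≠] (0:ℝ), 1 < slope (fun x : ℝ => Real.tanh (Λ * x)) 0 x :=
    hslope (Ioi_mem_nhds hΛ)
  have hev2 : ∀ᶠ x in 𝓝[>] (0:ℝ), 1 < slope (fun x : ℝ => Real.tanh (Λ * x)) 0 x :=
    hev.filter_mono (nhdsWithin_mono 0 fun x hx => ne_of_gt hx)
  have hlt1 : Iio (1:ℝ) ∈ 𝓝[>] (0:ℝ) := nhdsWithin_le_nhds (Iio_mem_nhds one_pos)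
  have hself : Ioi (0:ℝ) ∈ 𝓝[>] (0:ℝ) := self_mem_nhdsWithin
  obtain ⟨x0, hs, hx01, hx00⟩ :=
    (hev2.and ((eventually_iff_exists_mem.2 ⟨_, hlt1, fun x hx => hx⟩).and
      (eventually_iff_exists_mem.2 ⟨_, hself, fun x hx => hx⟩))).exists
  -- from slope bound: x0 < tanh (Λ x0)
  have hx0lt : x0 < Real.tanh (Λ * x0) := by
    have : slope (fun x : ℝ => Real.tanh (Λ * x)) 0 x0
        = Real.tanh (Λ * x0) / x0 := by
      simp [slope_def_field, div_eq_iff (ne_of_gt (show (0:ℝ) < x0 from hx00))]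
    rw [this] at hs
    calc x0 = 1 * x0 := (one_mul x0).symm
    _ < (Real.tanh (Λ * x0) / x0) * x0 := by
        exact mul_lt_mul_of_pos_right hs hx00
    _ = Real.tanh (Λ * x0) := div_mul_cancel₀ _ (ne_of_gt hx00)
  -- tanh Λ < 1
  have htanh_lt_one : ∀ y : ℝ, Real.tanh y < 1 := fun y => by
    rw [Real.tanh_eq_sinh_div_cosh, div_lt_one (Real.cosh_pos y)]
    exact Real.sinh_lt_cosh y
  set g : ℝ → ℝ := fun x => Real.tanh (Λ * x) - x with hg
  have hgc : Continuous g := (continuous_tanh'.comp (continuous_const.mul continuous_id)).sub continuous_id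
  have hg1 : g 1 < 0 := by
    simp only [hg, mul_one]
    linarith [htanh_lt_one Λ]
  have hgx0 : 0 < g x0 := by simp only [hg]; linarith
  have hivt := intermediate_value_Ioo' (le_of_lt hx01) hgc.continuousOn
    (show (0:ℝ) ∈ Ioo (g 1) (g x0) from ⟨hg1, hgx0⟩)
  obtain ⟨c, ⟨hc0, hc1⟩, hgc0⟩ := hivt
  have hcmem : c ∈ Set.Ioo (0:ℝ) 1 := ⟨lt_trans hx00 hc0, hc1⟩
  have hce : c = Real.tanh (Λ * c) := by
    have : Real.tanh (Λ * c) - c = 0 := hgc0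
    linarith
  refine ⟨c, ⟨hcmem, hce⟩, fun y hy => ?_⟩
  rcases lt_trichotomy y c with h | h | h
  · exact absurd (key y c hy ⟨hcmem, hce⟩ h) not_false
  · exact h
  · exact absurd (key c y ⟨hcmem, hce⟩ hy h) not_false
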